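/- Let n ≥ 1, let 1 ≤ k ≤ n, and let μ be the uniform (rotation-invariant) probability measure on the unit sphere in EuclideanSpace ℝ (Fin (2n)). For x on the sphere define the planar edges e_i(x) = ( 2(x_{2i}² − x_{2i+1}²), 4·x_{2i}·x_{2i+1} ) ∈ ℝ². Then the expected squared length of the chord skipping the first k edges of a random planar arm of length 2 satisfies ∫ ‖∑_{i=0}^{k-1} e_i(x)‖² dμ(x) = 8k/(n(n+1)), that is, E(Chord(k), Arm₂(n)) = 8k/(n(n+1)). -/

import Mathlib

open MeasureTheory Real

/-- The `i`-th planar edge of the arm determined by `√2·x` for `x ∈ ℝ^{2n}`: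
`eᵢ(x) = (2(x_{2i}² − x_{2i+1}²), 4·x_{2i}·x_{2i+1}) ∈ ℝ²`. -/
noncomputable def planarEdge (n : ℕ) (i : Fin n) (x : EuclideanSpace ℝ (Fin (2 * n))) :
    EuclideanSpace ℝ (Fin 2) :=
  (WithLp.equiv 2 (Fin 2 → ℝ)).symm
    ![2 * ((x ⟨2 * i, by have := i.isLt; omega⟩) ^ 2
        - (x ⟨2 * i + 1, by have := i.isLt; omega⟩) ^ 2),
      4 * (x ⟨2 * i, by have := i.isLt; omega⟩) * (x ⟨2 * i + 1, by have := i.isLt; omega⟩)]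



section
variable {m : ℕ}

/-- A linear isometry from a coordinate-permuting map. -/
noncomputable def permIso (e : Equiv.Perm (Fin m)) :
    EuclideanSpace ℝ (Fin m) ≃ₗᵢ[ℝ] EuclideanSpace ℝ (Fin m) :=
  { toLinearEquiv :=
    { toFun := fun x => WithLp.toLp 2 (fun i => x (e i))
      invFun := fun x => WithLp.toLp 2 (fun i => x (e.symm i))
      map_add' := fun x y => rfl
      map_smul' := fun c x => rfl
      left_inv := fun x => by ext i; show x (e (e.symm i)) = x i; rw [Equiv.apply_symm_apply]
      right_inv := fun x => by ext i; show x (e.symm (e i)) = x i; rw [Equiv.symm_apply_apply] }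
    norm_map' := fun x => by
      simp only [EuclideanSpace.norm_eq]
      congr 1
      exact Equiv.sum_comp e (fun i => ‖x i‖ ^ 2) }

lemma permIso_apply (e : Equiv.Perm (Fin m)) (x : EuclideanSpace ℝ (Fin m)) (i : Fin m) :
    permIso e x i = x (e i) := rfl
end

section
variable {m : ℕ}

lemma sum_split_two {M : Type*} [AddCommMonoid M] (a b : Fin m) (hab : a ≠ b) (f : Fin m → M) :
    ∑ i, f i = (∑ i ∈ Finset.univ \ {a, b}, f i) + (f a + f b) := by
  rw [← Finset.sum_pair hab, Finset.sum_sdiff (Finset.subset_univ _)]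


/-- Negation of one coordinate. -/
noncomputable def flipIso (a : Fin m) :
    EuclideanSpace ℝ (Fin m) ≃ₗᵢ[ℝ] EuclideanSpace ℝ (Fin m) :=
  { toLinearEquiv :=
    { toFun := fun x => WithLp.toLp 2 (fun i => if i = a then -x i else x i)
      invFun := fun x => WithLp.toLp 2 (fun i => if i = a then -x i else x i)
      map_add' := fun x y => by
        ext i
        show (if i = a then -(x + y) i else (x + y) i) = (if i = a then -x i else x i) + (if i = a then -y i else y i)
        simp only [PiLp.add_apply]
        split <;> ring
      map_smul' := fun c x => by
        ext i
        show (if i = a then -(c • x) i else (c • x) i) = c * (if i = a then -x i else x i)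
        simp only [PiLp.smul_apply, smul_eq_mul]
        split <;> ring
      left_inv := fun x => by
        ext i
        show (if i = a then -(if i = a then -x i else x i) else (if i = a then -x i else x i)) = x i
        split <;> simp_all
      right_inv := fun x => by
        ext i
        show (if i = a then -(if i = a then -x i else x i) else (if i = a then -x i else x i)) = x i
        split <;> simp_all }
    norm_map' := fun x => by
      simp only [EuclideanSpace.norm_eq]
      congr 1
      refine Finset.sum_congr rfl fun i _ => ?_
      show ‖if i = a then -x i else x i‖ ^ 2 = _
      split <;> simp }

lemma flipIso_apply (a : Fin m) (x : EuclideanSpace ℝ (Fin m)) (i : Fin m) :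
    flipIso a x i = if i = a then -x i else x i := rfl

noncomputable def rotFun (a b : Fin m) (x : Fin m → ℝ) : Fin m → ℝ := fun i =>
  if i = a then (x a + x b) / Real.sqrt 2
  else if i = b then (x a - x b) / Real.sqrt 2 else x i

lemma rotFun_invol (a b : Fin m) (hab : a ≠ b) (x : Fin m → ℝ) :
    rotFun a b (rotFun a b x) = x := by
  have h0 : Real.sqrt 2 ≠ 0 := by positivity
  have hs : Real.sqrt 2 * Real.sqrt 2 = 2 := Real.mul_self_sqrt (by norm_num)
  funext i
  by_cases hia : i = a
  · subst hia
    simp only [rotFun, if_pos rfl, if_neg (Ne.symm hab), if_neg hab, ↓reduceIte]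
    field_simp
    rw [Real.sq_sqrt (by norm_num : (0:ℝ) ≤ 2)]; ring
  · by_cases hib : i = b
    · subst hib
      simp only [rotFun, if_pos rfl, if_neg (Ne.symm hab), if_neg hab, if_neg hia, ↓reduceIte]
      field_simp
      rw [Real.sq_sqrt (by norm_num : (0:ℝ) ≤ 2)]; ring
    · simp only [rotFun, if_neg hia, if_neg hib]

lemma rotFun_sum_sq (a b : Fin m) (hab : a ≠ b) (x : Fin m → ℝ) :
    ∑ i, ‖rotFun a b x i‖ ^ 2 = ∑ i, ‖x i‖ ^ 2 := by
  have hs : Real.sqrt 2 ^ 2 = 2 := Real.sq_sqrt (by norm_num)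
  rw [sum_split_two a b hab (fun i => ‖rotFun a b x i‖ ^ 2),
      sum_split_two a b hab (fun i => ‖x i‖ ^ 2)]
  congr 1
  · refine Finset.sum_congr rfl fun i hi => ?_
    simp only [Finset.mem_sdiff, Finset.mem_insert, Finset.mem_singleton] at hi
    push_neg at hi
    simp only [rotFun, if_neg hi.2.1, if_neg hi.2.2]
  · simp only [rotFun, Real.norm_eq_abs, sq_abs]
    rw [if_pos trivial, if_neg (Ne.symm hab), if_pos trivial]
    rw [div_pow, div_pow, hs]
    ring

/-- Reflection mixing two coordinates: `xₐ ↦ (xₐ+x_b)/√2`, `x_b ↦ (xₐ−x_b)/√2`. -/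
noncomputable def rotIso (a b : Fin m) (hab : a ≠ b) :
    EuclideanSpace ℝ (Fin m) ≃ₗᵢ[ℝ] EuclideanSpace ℝ (Fin m) :=
  { toLinearEquiv :=
    { toFun := fun x => WithLp.toLp 2 (rotFun a b x)
      invFun := fun x => WithLp.toLp 2 (rotFun a b x)
      map_add' := fun x y => by
        ext i
        show rotFun a b _ i = rotFun a b x i + rotFun a b y i
        simp only [rotFun, PiLp.add_apply]
        split
        · ring
        · split <;> ring
      map_smul' := fun c x => by
        ext i
        show rotFun a b _ i = c * rotFun a b x i
        simp only [rotFun, PiLp.smul_apply, smul_eq_mul]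
        split
        · ring
        · split <;> ring
      left_inv := fun x => by ext i; exact congrFun (rotFun_invol a b hab (WithLp.ofLp x)) i
      right_inv := fun x => by ext i; exact congrFun (rotFun_invol a b hab (WithLp.ofLp x)) i }
    norm_map' := fun x => by
      simp only [EuclideanSpace.norm_eq]
      exact congrArg Real.sqrt (rotFun_sum_sq a b hab x) }

lemma rotIso_apply (a b : Fin m) (hab : a ≠ b) (x : EuclideanSpace ℝ (Fin m)) (i : Fin m) :
    rotIso a b hab x i =
      if i = a then (x a + x b) / Real.sqrt 2
      else if i = b then (x a - x b) / Real.sqrt 2 else x i := rfl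
end

section
variable {m : ℕ} {μ : Measure (EuclideanSpace ℝ (Fin m))} [IsProbabilityMeasure μ]

lemma integral_comp_iso
    (hinv : ∀ O : EuclideanSpace ℝ (Fin m) ≃ₗᵢ[ℝ] EuclideanSpace ℝ (Fin m),
      Measure.map (fun x => O x) μ = μ)
    (O : EuclideanSpace ℝ (Fin m) ≃ₗᵢ[ℝ] EuclideanSpace ℝ (Fin m))
    (f : EuclideanSpace ℝ (Fin m) → ℝ) :
    ∫ x, f (O x) ∂μ = ∫ x, f x ∂μ := by
  conv_rhs => rw [← hinv O]
  rw [show (fun x => (O x)) = ⇑(O.toHomeomorph.toMeasurableEquiv) from rfl,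
    MeasureTheory.integral_map_equiv O.toHomeomorph.toMeasurableEquiv f]
  rfl

lemma ae_norm_one (hsphere : μ (Metric.sphere (0 : EuclideanSpace ℝ (Fin m)) 1) = 1) :
    ∀ᵐ x ∂μ, ‖x‖ = 1 := by
  have hms : MeasurableSet (Metric.sphere (0 : EuclideanSpace ℝ (Fin m)) 1) :=
    Metric.isClosed_sphere.measurableSet
  have hc : μ (Metric.sphere (0 : EuclideanSpace ℝ (Fin m)) 1)ᶜ = 0 := by
    rw [measure_compl hms (measure_ne_top μ _), hsphere, measure_univ, tsub_self]
  refine (ae_iff.2 ?_)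
  convert hc using 2
  ext x
  simp [Metric.mem_sphere, dist_zero_right]

lemma integrable_of_bdd_on_sphere
    (hsphere : μ (Metric.sphere (0 : EuclideanSpace ℝ (Fin m)) 1) = 1)
    (f : EuclideanSpace ℝ (Fin m) → ℝ) (hf : Continuous f)
    (C : ℝ) (hC : ∀ x : EuclideanSpace ℝ (Fin m), ‖x‖ = 1 → |f x| ≤ C) :
    Integrable f μ := by
  refine Integrable.mono' (integrable_const C) hf.aestronglyMeasurable ?_
  filter_upwards [ae_norm_one hsphere] with x hx
  simpa [Real.norm_eq_abs] using hC x hx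

lemma sum_sq_eq_one {x : EuclideanSpace ℝ (Fin m)} (hx : ‖x‖ = 1) :
    ∑ i, (x i) ^ 2 = 1 := by
  have := congrArg (fun t => t ^ 2) (EuclideanSpace.norm_eq x)
  simp only [hx, one_pow] at this
  rw [Real.sq_sqrt (by positivity)] at this
  simp only [Real.norm_eq_abs, sq_abs] at this
  exact this.symm

lemma abs_coord_le_one {x : EuclideanSpace ℝ (Fin m)} (hx : ‖x‖ = 1) (i : Fin m) :
    |x i| ≤ 1 := by
  have h := sum_sq_eq_one hx
  have : (x i) ^ 2 ≤ 1 := by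
    calc (x i) ^ 2 ≤ ∑ j, (x j) ^ 2 :=
          Finset.single_le_sum (fun j _ => sq_nonneg (x j)) (Finset.mem_univ i)
      _ = 1 := h
  nlinarith [abs_nonneg (x i), sq_abs (x i)]
end

section moments
variable {m : ℕ} {μ : Measure (EuclideanSpace ℝ (Fin m))} [IsProbabilityMeasure μ]

lemma contCoord (i : Fin m) : Continuous fun x : EuclideanSpace ℝ (Fin m) => x i :=
  (EuclideanSpace.proj i).continuous

/-- Integrability of quartic monomials. -/
lemma integrable_mono4
    (hsphere : μ (Metric.sphere (0 : EuclideanSpace ℝ (Fin m)) 1) = 1)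
    (a b c d : Fin m) :
    Integrable (fun x : EuclideanSpace ℝ (Fin m) => x a * x b * x c * x d) μ := by
  refine integrable_of_bdd_on_sphere hsphere _ ?_ 1 ?_
  · exact (((contCoord a).mul (contCoord b)).mul (contCoord c)).mul (contCoord d)
  · intro x hx
    have ha := abs_coord_le_one hx a
    have hb := abs_coord_le_one hx b
    have hc := abs_coord_le_one hx c
    have hd := abs_coord_le_one hx d
    have h0 : ∀ i : Fin m, (0:ℝ) ≤ |x i| := fun i => abs_nonneg _
    calc |x a * x b * x c * x d| = |x a| * |x b| * |x c| * |x d| := by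
          rw [abs_mul, abs_mul, abs_mul]
      _ ≤ 1 := mul_le_one₀ (mul_le_one₀ (mul_le_one₀ ha (h0 b) hb) (h0 c) hc) (h0 d) hd

/-- The mixed second moments. -/
noncomputable def Mmt (μ : Measure (EuclideanSpace ℝ (Fin m))) (a b : Fin m) : ℝ :=
  ∫ x, (x a) ^ 2 * (x b) ^ 2 ∂μ

lemma Mmt_perm
    (hinv : ∀ O : EuclideanSpace ℝ (Fin m) ≃ₗᵢ[ℝ] EuclideanSpace ℝ (Fin m),
      Measure.map (fun x => O x) μ = μ)
    (σ : Equiv.Perm (Fin m)) (a b : Fin m) :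
    Mmt μ (σ a) (σ b) = Mmt μ a b := by
  have := integral_comp_iso hinv (permIso σ) (fun x => (x a) ^ 2 * (x b) ^ 2)
  calc Mmt μ (σ a) (σ b) = ∫ x, ((permIso σ x) a) ^ 2 * ((permIso σ x) b) ^ 2 ∂μ := rfl
    _ = Mmt μ a b := this

lemma Mmt_pair_eq
    (hinv : ∀ O : EuclideanSpace ℝ (Fin m) ≃ₗᵢ[ℝ] EuclideanSpace ℝ (Fin m),
      Measure.map (fun x => O x) μ = μ)
    (a b c d : Fin m) (hab : a ≠ b) (hcd : c ≠ d) :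
    Mmt μ a b = Mmt μ c d := by
  set σ₁ := Equiv.swap c a with hσ₁
  have h1 : σ₁ c = a := Equiv.swap_apply_left c a
  have hda : σ₁ d ≠ a := by
    rw [← h1]; exact fun h => hcd (σ₁.injective h).symm
  set σ₂ := Equiv.swap (σ₁ d) b with hσ₂
  set σ := σ₁.trans σ₂ with hσ
  have hc : σ c = a := by
    simp only [hσ, Equiv.trans_apply, h1, hσ₂]
    exact Equiv.swap_apply_of_ne_of_ne (Ne.symm hda) hab
  have hd : σ d = b := by
    simp only [hσ, Equiv.trans_apply, hσ₂]
    exact Equiv.swap_apply_left _ _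
  have := Mmt_perm hinv σ c d
  rw [hc, hd] at this
  exact this

lemma Mmt_diag_eq
    (hinv : ∀ O : EuclideanSpace ℝ (Fin m) ≃ₗᵢ[ℝ] EuclideanSpace ℝ (Fin m),
      Measure.map (fun x => O x) μ = μ)
    (a c : Fin m) : Mmt μ a a = Mmt μ c c := by
  have := Mmt_perm hinv (Equiv.swap c a) c c
  rwa [Equiv.swap_apply_left] at this

/-- Integral of a function odd in coordinate `a` vanishes. -/
lemma integral_odd_eq_zero
    (hinv : ∀ O : EuclideanSpace ℝ (Fin m) ≃ₗᵢ[ℝ] EuclideanSpace ℝ (Fin m),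
      Measure.map (fun x => O x) μ = μ)
    (a : Fin m) (f : EuclideanSpace ℝ (Fin m) → ℝ)
    (hf : ∀ x, f (flipIso a x) = - f x) :
    ∫ x, f x ∂μ = 0 := by
  have h := integral_comp_iso hinv (flipIso a) f
  simp only [hf] at h
  rw [integral_neg] at h
  linarith

lemma integrable_sqsq
    (hsphere : μ (Metric.sphere (0 : EuclideanSpace ℝ (Fin m)) 1) = 1) (a b : Fin m) :
    Integrable (fun x : EuclideanSpace ℝ (Fin m) => (x a) ^ 2 * (x b) ^ 2) μ := by
  have h : (fun x : EuclideanSpace ℝ (Fin m) => (x a) ^ 2 * (x b) ^ 2)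
      = fun x => x a * x a * x b * x b := by funext x; ring
  rw [h]; exact integrable_mono4 hsphere a a b b

lemma Mmt_total
    (hsphere : μ (Metric.sphere (0 : EuclideanSpace ℝ (Fin m)) 1) = 1) :
    ∑ a : Fin m, ∑ b : Fin m, Mmt μ a b = 1 := by
  have hswap : ∀ a : Fin m, ∑ b, Mmt μ a b = ∫ x, ∑ b, (x a) ^ 2 * (x b) ^ 2 ∂μ := by
    intro a
    rw [integral_finset_sum _ (fun b _ => integrable_sqsq hsphere a b)]
    rfl
  have h2 : ∑ a : Fin m, ∑ b : Fin m, Mmt μ a b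
      = ∫ x, ∑ a : Fin m, ∑ b : Fin m, (x a) ^ 2 * (x b) ^ 2 ∂μ := by
    rw [integral_finset_sum]
    · exact Finset.sum_congr rfl fun a _ => hswap a
    · intro a _
      exact integrable_finset_sum _ (fun b _ => integrable_sqsq hsphere a b)
  rw [h2]
  have hae : ∀ᵐ x ∂μ, (∑ a : Fin m, ∑ b : Fin m, (x a) ^ 2 * (x b) ^ 2) = 1 := by
    filter_upwards [ae_norm_one hsphere] with x hx
    rw [← Fintype.sum_mul_sum (fun a => (x a) ^ 2) (fun b => (x b) ^ 2)]
    rw [sum_sq_eq_one hx]; ring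
  rw [integral_congr_ae hae]
  simp

lemma Q_eq_threeP
    (hsphere : μ (Metric.sphere (0 : EuclideanSpace ℝ (Fin m)) 1) = 1)
    (hinv : ∀ O : EuclideanSpace ℝ (Fin m) ≃ₗᵢ[ℝ] EuclideanSpace ℝ (Fin m),
      Measure.map (fun x => O x) μ = μ)
    (a b : Fin m) (hab : a ≠ b) :
    Mmt μ a a = 3 * Mmt μ a b := by
  have hs : Real.sqrt 2 ^ 2 = 2 := Real.sq_sqrt (by norm_num)
  have key := integral_comp_iso hinv (rotIso a b hab) (fun x => (x a) ^ 2 * (x a) ^ 2)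
  have happ : ∀ x : EuclideanSpace ℝ (Fin m),
      (rotIso a b hab x) a = (x a + x b) / Real.sqrt 2 := by
    intro x; rw [rotIso_apply, if_pos rfl]
  have hfun : (fun x : EuclideanSpace ℝ (Fin m) =>
        ((rotIso a b hab x) a) ^ 2 * ((rotIso a b hab x) a) ^ 2)
      = fun x => (1/4) * ((x a) ^ 2 * (x a) ^ 2) + (x a * x a * x a * x b)
          + (3/2) * ((x a) ^ 2 * (x b) ^ 2) + (x a * x b * x b * x b)
          + (1/4) * ((x b) ^ 2 * (x b) ^ 2) := by
    funext x
    rw [happ x]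
    rw [div_pow, hs]
    ring
  rw [hfun] at key
  have i1 : Integrable (fun x : EuclideanSpace ℝ (Fin m) =>
      (1/4) * ((x a) ^ 2 * (x a) ^ 2)) μ := (integrable_sqsq hsphere a a).const_mul _
  have i2 : Integrable (fun x : EuclideanSpace ℝ (Fin m) =>
      x a * x a * x a * x b) μ := integrable_mono4 hsphere a a a b
  have i3 : Integrable (fun x : EuclideanSpace ℝ (Fin m) =>
      (3/2) * ((x a) ^ 2 * (x b) ^ 2)) μ := (integrable_sqsq hsphere a b).const_mul _
  have i4 : Integrable (fun x : EuclideanSpace ℝ (Fin m) =>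
      x a * x b * x b * x b) μ := integrable_mono4 hsphere a b b b
  have i5 : Integrable (fun x : EuclideanSpace ℝ (Fin m) =>
      (1/4) * ((x b) ^ 2 * (x b) ^ 2)) μ := (integrable_sqsq hsphere b b).const_mul _
  have e1 : ∫ x, ((1/4) * ((x a) ^ 2 * (x a) ^ 2) + (x a * x a * x a * x b)
          + (3/2) * ((x a) ^ 2 * (x b) ^ 2) + (x a * x b * x b * x b)
          + (1/4) * ((x b) ^ 2 * (x b) ^ 2)) ∂μ
      = (∫ x, ((1/4) * ((x a) ^ 2 * (x a) ^ 2) + (x a * x a * x a * x b)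
          + (3/2) * ((x a) ^ 2 * (x b) ^ 2) + (x a * x b * x b * x b)) ∂μ)
        + ∫ x, (1/4) * ((x b) ^ 2 * (x b) ^ 2) ∂μ :=
    integral_add (((i1.add i2).add i3).add i4) i5
  have e2 : ∫ x, ((1/4) * ((x a) ^ 2 * (x a) ^ 2) + (x a * x a * x a * x b)
          + (3/2) * ((x a) ^ 2 * (x b) ^ 2) + (x a * x b * x b * x b)) ∂μ
      = (∫ x, ((1/4) * ((x a) ^ 2 * (x a) ^ 2) + (x a * x a * x a * x b)
          + (3/2) * ((x a) ^ 2 * (x b) ^ 2)) ∂μ)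
        + ∫ x, (x a * x b * x b * x b) ∂μ :=
    integral_add ((i1.add i2).add i3) i4
  have e3 : ∫ x, ((1/4) * ((x a) ^ 2 * (x a) ^ 2) + (x a * x a * x a * x b)
          + (3/2) * ((x a) ^ 2 * (x b) ^ 2)) ∂μ
      = (∫ x, ((1/4) * ((x a) ^ 2 * (x a) ^ 2) + (x a * x a * x a * x b)) ∂μ)
        + ∫ x, (3/2) * ((x a) ^ 2 * (x b) ^ 2) ∂μ :=
    integral_add (i1.add i2) i3
  have e4 : ∫ x, ((1/4) * ((x a) ^ 2 * (x a) ^ 2) + (x a * x a * x a * x b)) ∂μ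
      = (∫ x, (1/4) * ((x a) ^ 2 * (x a) ^ 2) ∂μ) + ∫ x, (x a * x a * x a * x b) ∂μ :=
    integral_add i1 i2
  rw [e1, e2, e3, e4, integral_const_mul, integral_const_mul, integral_const_mul] at key
  have T1 : ∫ x, x a * x a * x a * x b ∂μ = 0 := by
    refine integral_odd_eq_zero hinv b _ (fun x => ?_)
    simp only [flipIso_apply, if_pos rfl, if_neg hab, if_true]
    ring
  have T2 : ∫ x, x a * x b * x b * x b ∂μ = 0 := by
    refine integral_odd_eq_zero hinv a _ (fun x => ?_)
    simp only [flipIso_apply, if_pos rfl, if_neg (Ne.symm hab), if_true]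
    ring
  rw [T1, T2] at key
  have hQb : Mmt μ b b = Mmt μ a a := Mmt_diag_eq hinv b a
  have : (1/4 : ℝ) * Mmt μ a a + 0 + (3/2) * Mmt μ a b + 0 + (1/4) * Mmt μ b b
      = Mmt μ a a := key
  rw [hQb] at this
  linarith

lemma Mmt_value
    (hsphere : μ (Metric.sphere (0 : EuclideanSpace ℝ (Fin m)) 1) = 1)
    (hinv : ∀ O : EuclideanSpace ℝ (Fin m) ≃ₗᵢ[ℝ] EuclideanSpace ℝ (Fin m),
      Measure.map (fun x => O x) μ = μ)
    (a b : Fin m) (hab : a ≠ b) :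
    Mmt μ a b = 1 / ((m : ℝ) * ((m : ℝ) + 2)) := by
  have hQ : Mmt μ a a = 3 * Mmt μ a b := Q_eq_threeP hsphere hinv a b hab
  have htot := Mmt_total hsphere
  have hinner : ∀ c : Fin m, ∑ d, Mmt μ c d
      = (m : ℝ) * Mmt μ a b + (Mmt μ a a - Mmt μ a b) := by
    intro c
    have hterm : ∀ d, Mmt μ c d
        = Mmt μ a b + (if c = d then Mmt μ a a - Mmt μ a b else 0) := by
      intro d
      by_cases h : c = d
      · subst h
        rw [if_pos rfl]
        have := Mmt_diag_eq hinv c a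
        linarith
      · rw [if_neg h, Mmt_pair_eq hinv c d a b h hab]
        ring
    rw [Finset.sum_congr rfl (fun d _ => hterm d), Finset.sum_add_distrib,
        Finset.sum_const, Finset.sum_ite_eq]
    simp [Finset.card_univ, nsmul_eq_mul]
  rw [Finset.sum_congr rfl (fun c _ => hinner c), Finset.sum_const] at htot
  simp only [Finset.card_univ, Fintype.card_fin, nsmul_eq_mul] at htot
  have hm0 : (0 : ℝ) < (m : ℝ) := by
    have : 0 < m := Fin.pos_iff_nonempty.2 ⟨a⟩
    exact_mod_cast this
  have hne : (m : ℝ) * ((m : ℝ) + 2) ≠ 0 := by positivity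
  rw [eq_div_iff hne]
  nlinarith [htot, hQ]

lemma integral_add5 {f1 f2 f3 f4 f5 : EuclideanSpace ℝ (Fin m) → ℝ}
    (h1 : Integrable f1 μ) (h2 : Integrable f2 μ) (h3 : Integrable f3 μ)
    (h4 : Integrable f4 μ) (h5 : Integrable f5 μ) :
    ∫ x, (f1 x + f2 x + f3 x + f4 x + f5 x) ∂μ
      = (∫ x, f1 x ∂μ) + (∫ x, f2 x ∂μ) + (∫ x, f3 x ∂μ) + (∫ x, f4 x ∂μ)
        + ∫ x, f5 x ∂μ := by
  have h12 : Integrable (fun x => f1 x + f2 x) μ := h1.add h2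
  have h123 : Integrable (fun x => f1 x + f2 x + f3 x) μ := h12.add h3
  have h1234 : Integrable (fun x => f1 x + f2 x + f3 x + f4 x) μ := h123.add h4
  rw [integral_add h1234 h5, integral_add h123 h4, integral_add h12 h3, integral_add h1 h2]

end moments



/-- The expected squared length of the chord skipping the first `k` edges of a random planar
arm of total length 2: `E(Chord(k), Arm₂(n)) = 8k/(n(n+1))`.  Here `μ` is the uniform
(rotation-invariant) probability measure on the unit sphere in `ℝ^{2n}`. -/
theorem expected_chord_planar_arm (n k : ℕ) (hn : 1 ≤ n) (hk1 : 1 ≤ k) (hkn : k ≤ n)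
    (μ : Measure (EuclideanSpace ℝ (Fin (2 * n)))) [IsProbabilityMeasure μ]
    (hsphere : μ (Metric.sphere (0 : EuclideanSpace ℝ (Fin (2 * n))) 1) = 1)
    (hinv : ∀ O : EuclideanSpace ℝ (Fin (2 * n)) ≃ₗᵢ[ℝ] EuclideanSpace ℝ (Fin (2 * n)),
      Measure.map (fun x => O x) μ = μ) :
    ∫ x, ‖∑ i : Fin k, planarEdge n (Fin.castLE hkn i) x‖ ^ 2 ∂μ
      = 8 * (k : ℝ) / ((n : ℝ) * ((n : ℝ) + 1)) := by
  
  classical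
  have hA : ∀ i : Fin k, 2 * (i : ℕ) < 2 * n := fun i => by have := i.isLt; omega
  have hB : ∀ i : Fin k, 2 * (i : ℕ) + 1 < 2 * n := fun i => by have := i.isLt; omega
  let A : Fin k → Fin (2 * n) := fun i => ⟨2 * (i : ℕ), hA i⟩
  let B : Fin k → Fin (2 * n) := fun i => ⟨2 * (i : ℕ) + 1, hB i⟩
  set P : ℝ := 1 / (((2 * n : ℕ) : ℝ) * (((2 * n : ℕ) : ℝ) + 2)) with hPdef
  -- basic distinctness
  have hABi : ∀ i : Fin k, A i ≠ B i := by
    intro i h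
    have := congrArg Fin.val h
    simp only [A, B] at this
    omega
  have hAne : ∀ i j : Fin k, i ≠ j → A i ≠ A j := by
    intro i j hij h
    have h1 := congrArg Fin.val h
    simp only [A] at h1
    exact hij (Fin.ext (by omega))
  have hABij : ∀ i j : Fin k, A i ≠ B j := by
    intro i j h
    have := congrArg Fin.val h
    simp only [A, B] at this
    omega
  have hBne : ∀ i j : Fin k, i ≠ j → B i ≠ B j := by
    intro i j hij h
    have h1 := congrArg Fin.val h
    simp only [B] at h1
    exact hij (Fin.ext (by omega))
  -- moment values
  have hMval : ∀ a b : Fin (2 * n), a ≠ b → Mmt μ a b = P :=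
    fun a b hab => Mmt_value hsphere hinv a b hab
  have hQval : ∀ a : Fin (2 * n), Mmt μ a a = 3 * P := by
    intro a
    obtain ⟨b, hb⟩ : ∃ b : Fin (2 * n), a ≠ b := by
      by_cases h : a = ⟨0, by omega⟩
      · exact ⟨⟨1, by omega⟩, by
          subst h
          intro hcon
          have := congrArg Fin.val hcon
          simp at this⟩
      · exact ⟨⟨0, by omega⟩, h⟩
    rw [Q_eq_threeP hsphere hinv a b hb, hMval a b hb]
  -- pointwise expansion of the squared norm
  have hnorm2 : ∀ w : EuclideanSpace ℝ (Fin 2), ‖w‖ ^ 2 = (w 0) ^ 2 + (w 1) ^ 2 := by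
    intro w
    rw [EuclideanSpace.norm_eq, Real.sq_sqrt (by positivity)]
    simp [Fin.sum_univ_two, sq_abs]
  have hpt : ∀ x : EuclideanSpace ℝ (Fin (2 * n)),
      ‖∑ i : Fin k, planarEdge n (Fin.castLE hkn i) x‖ ^ 2
        = ∑ i : Fin k, ∑ j : Fin k,
            ((2 * ((x (A i)) ^ 2 - (x (B i)) ^ 2)) * (2 * ((x (A j)) ^ 2 - (x (B j)) ^ 2))
              + (4 * x (A i) * x (B i)) * (4 * x (A j) * x (B j))) := by
    intro x
    rw [hnorm2]
    have h0 : (∑ i : Fin k, planarEdge n (Fin.castLE hkn i) x) 0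
        = ∑ i : Fin k, (2 * ((x (A i)) ^ 2 - (x (B i)) ^ 2)) := by
      rw [WithLp.ofLp_sum, Finset.sum_apply 0 Finset.univ (fun i : Fin k => planarEdge n (Fin.castLE hkn i) x)]
      rfl
    have h1 : (∑ i : Fin k, planarEdge n (Fin.castLE hkn i) x) 1
        = ∑ i : Fin k, (4 * x (A i) * x (B i)) := by
      rw [WithLp.ofLp_sum, Finset.sum_apply 1 Finset.univ (fun i : Fin k => planarEdge n (Fin.castLE hkn i) x)]
      rfl
    rw [h0, h1, pow_two, pow_two, Finset.sum_mul_sum, Finset.sum_mul_sum,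
        ← Finset.sum_add_distrib]
    exact Finset.sum_congr rfl fun i _ => (Finset.sum_add_distrib).symm
  -- integral of each term
  have hint : ∀ i j : Fin k, Integrable (fun x : EuclideanSpace ℝ (Fin (2 * n)) =>
      (2 * ((x (A i)) ^ 2 - (x (B i)) ^ 2)) * (2 * ((x (A j)) ^ 2 - (x (B j)) ^ 2))
        + (4 * x (A i) * x (B i)) * (4 * x (A j) * x (B j))) μ := by
    intro i j
    have hfe : (fun x : EuclideanSpace ℝ (Fin (2 * n)) =>
        (2 * ((x (A i)) ^ 2 - (x (B i)) ^ 2)) * (2 * ((x (A j)) ^ 2 - (x (B j)) ^ 2))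
          + (4 * x (A i) * x (B i)) * (4 * x (A j) * x (B j)))
        = fun x => (4 : ℝ) * ((x (A i)) ^ 2 * (x (A j)) ^ 2)
            + (-4 : ℝ) * ((x (A i)) ^ 2 * (x (B j)) ^ 2)
            + (-4 : ℝ) * ((x (B i)) ^ 2 * (x (A j)) ^ 2)
            + (4 : ℝ) * ((x (B i)) ^ 2 * (x (B j)) ^ 2)
            + (16 : ℝ) * (x (A i) * x (B i) * x (A j) * x (B j)) := by
      funext x; ring
    rw [hfe]
    exact (((((integrable_sqsq hsphere _ _).const_mul _).add
      ((integrable_sqsq hsphere _ _).const_mul _)).add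
      ((integrable_sqsq hsphere _ _).const_mul _)).add
      ((integrable_sqsq hsphere _ _).const_mul _)).add
      ((integrable_mono4 hsphere _ _ _ _).const_mul _)
  have hval : ∀ i j : Fin k, (∫ x, ((2 * ((x (A i)) ^ 2 - (x (B i)) ^ 2))
        * (2 * ((x (A j)) ^ 2 - (x (B j)) ^ 2))
        + (4 * x (A i) * x (B i)) * (4 * x (A j) * x (B j))) ∂μ)
      = if i = j then 32 * P else 0 := by
    intro i j
    have hfe : (fun x : EuclideanSpace ℝ (Fin (2 * n)) =>
        (2 * ((x (A i)) ^ 2 - (x (B i)) ^ 2)) * (2 * ((x (A j)) ^ 2 - (x (B j)) ^ 2))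
          + (4 * x (A i) * x (B i)) * (4 * x (A j) * x (B j)))
        = fun x => (4 : ℝ) * ((x (A i)) ^ 2 * (x (A j)) ^ 2)
            + (-4 : ℝ) * ((x (A i)) ^ 2 * (x (B j)) ^ 2)
            + (-4 : ℝ) * ((x (B i)) ^ 2 * (x (A j)) ^ 2)
            + (4 : ℝ) * ((x (B i)) ^ 2 * (x (B j)) ^ 2)
            + (16 : ℝ) * (x (A i) * x (B i) * x (A j) * x (B j)) := by
      funext x; ring
    have hsplit := integral_add5 (μ := μ)
      ((integrable_sqsq hsphere (A i) (A j)).const_mul (4 : ℝ))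
      ((integrable_sqsq hsphere (A i) (B j)).const_mul (-4 : ℝ))
      ((integrable_sqsq hsphere (B i) (A j)).const_mul (-4 : ℝ))
      ((integrable_sqsq hsphere (B i) (B j)).const_mul (4 : ℝ))
      ((integrable_mono4 hsphere (A i) (B i) (A j) (B j)).const_mul (16 : ℝ))
    calc ∫ x, ((2 * ((x (A i)) ^ 2 - (x (B i)) ^ 2)) * (2 * ((x (A j)) ^ 2 - (x (B j)) ^ 2))
          + (4 * x (A i) * x (B i)) * (4 * x (A j) * x (B j))) ∂μ
        = ∫ x, ((4 : ℝ) * ((x (A i)) ^ 2 * (x (A j)) ^ 2)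
            + (-4 : ℝ) * ((x (A i)) ^ 2 * (x (B j)) ^ 2)
            + (-4 : ℝ) * ((x (B i)) ^ 2 * (x (A j)) ^ 2)
            + (4 : ℝ) * ((x (B i)) ^ 2 * (x (B j)) ^ 2)
            + (16 : ℝ) * (x (A i) * x (B i) * x (A j) * x (B j))) ∂μ := by rw [hfe]
      _ = (4 : ℝ) * Mmt μ (A i) (A j) + (-4 : ℝ) * Mmt μ (A i) (B j)
            + (-4 : ℝ) * Mmt μ (B i) (A j) + (4 : ℝ) * Mmt μ (B i) (B j)
            + (16 : ℝ) * ∫ x, x (A i) * x (B i) * x (A j) * x (B j) ∂μ := by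
          rw [hsplit, integral_const_mul, integral_const_mul, integral_const_mul,
              integral_const_mul, integral_const_mul]
          rfl
      _ = if i = j then 32 * P else 0 := by
          by_cases hij : i = j
          · subst hij
            rw [if_pos rfl, hQval (A i), hQval (B i), hMval (A i) (B i) (hABi i),
                hMval (B i) (A i) (Ne.symm (hABi i))]
            have hlast : ∫ x, x (A i) * x (B i) * x (A i) * x (B i) ∂μ = Mmt μ (A i) (B i) := by
              have : (fun x : EuclideanSpace ℝ (Fin (2 * n)) =>
                  x (A i) * x (B i) * x (A i) * x (B i))
                  = fun x => (x (A i)) ^ 2 * (x (B i)) ^ 2 := by funext x; ring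
              rw [this]; rfl
            rw [hlast, hMval (A i) (B i) (hABi i)]
            ring
          · rw [if_neg hij,
                hMval (A i) (A j) (hAne i j hij), hMval (A i) (B j) (hABij i j),
                hMval (B i) (A j) (Ne.symm (hABij j i)), hMval (B i) (B j) (hBne i j hij)]
            have hodd : ∫ x, x (A i) * x (B i) * x (A j) * x (B j) ∂μ = 0 := by
              refine integral_odd_eq_zero hinv (A i) _ (fun x => ?_)
              simp only [flipIso_apply, if_pos rfl, if_neg (Ne.symm (hABi i)),
                if_neg (hAne j i (Ne.symm hij)), if_neg (Ne.symm (hABij i j)),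
                if_true]
              ring
            rw [hodd]
            ring
  -- assemble
  have hmain : ∫ x, ‖∑ i : Fin k, planarEdge n (Fin.castLE hkn i) x‖ ^ 2 ∂μ
      = ∑ i : Fin k, ∑ j : Fin k, (if i = j then 32 * P else 0) := by
    calc ∫ x, ‖∑ i : Fin k, planarEdge n (Fin.castLE hkn i) x‖ ^ 2 ∂μ
        = ∫ x, ∑ i : Fin k, ∑ j : Fin k,
            ((2 * ((x (A i)) ^ 2 - (x (B i)) ^ 2)) * (2 * ((x (A j)) ^ 2 - (x (B j)) ^ 2))
              + (4 * x (A i) * x (B i)) * (4 * x (A j) * x (B j))) ∂μ := by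
          exact integral_congr_ae (Filter.Eventually.of_forall hpt)
      _ = ∑ i : Fin k, ∑ j : Fin k, (if i = j then 32 * P else 0) := by
          rw [integral_finset_sum _ (fun i _ =>
            integrable_finset_sum _ (fun j _ => hint i j))]
          refine Finset.sum_congr rfl fun i _ => ?_
          rw [integral_finset_sum _ (fun j _ => hint i j)]
          exact Finset.sum_congr rfl fun j _ => hval i j
  rw [hmain]
  have hdiag : ∑ i : Fin k, ∑ j : Fin k, (if i = j then (32 : ℝ) * P else 0)
      = (k : ℝ) * (32 * P) := by
    have : ∀ i : Fin k, ∑ j : Fin k, (if i = j then (32 : ℝ) * P else 0) = 32 * P := by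
      intro i
      rw [Finset.sum_ite_eq]
      simp
    rw [Finset.sum_congr rfl fun i _ => this i, Finset.sum_const, Finset.card_univ,
        Fintype.card_fin, nsmul_eq_mul]
  rw [hdiag, hPdef]
  have hn0 : (0 : ℝ) < (n : ℝ) := by exact_mod_cast hn
  push_cast
  field_simp
  ring
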